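/- Assume the genericity condition. Let p ∈ ℤ² and consider the four sites of the unit square s₁ = p, s₂ = p + e₁, s₃ = p + e₁ + e₂, s₄ = p + e₂, and assume every site of ℤ² at ℓ¹-distance at most 2 from one of these four sites lies in V. Let η : V → {0,…,N} satisfy |η s₁ − η s₂| ≥ 2, |η s₂ − η s₃| ≥ 2, |η s₃ − η s₄| ≥ 2 and |η s₄ − η s₁| ≥ 2. Then any configuration η' obtained from η by a finite sequence of nearest-neighbour particle hops (each hop moving one particle between two sites of V at ℓ¹-distance 1, the source having at least one particle and the target having fewer than N particles) each of which preserves the interaction energy H⁰ᵢ, satisfies η' sᵢ = η sᵢ for i = 1,2,3,4. In other words, a square of nearest neighbours whose occupation numbers differ by at least 2 along each side is frozen under the resonant dynamics. -/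

import Mathlib

open Finset

/-- First lattice unit vector of `ℤ²`. -/
def e1 : ℤ × ℤ := (1, 0)

/-- Second lattice unit vector of `ℤ²`. -/
def e2 : ℤ × ℤ := (0, 1)

/-- The `ℓ¹` distance on `ℤ²`. -/
def dist1 (x y : ℤ × ℤ) : ℕ :=
  (x.1 - y.1).natAbs + (x.2 - y.2).natAbs

/-- Interaction energy `H⁰ᵢ(η) = Σ_{x : x, x+e₁ ∈ V} f₁(η x, η (x+e₁))
+ Σ_{x : x, x+e₂ ∈ V} f₂(η x, η (x+e₂))`. -/
noncomputable def interactionEnergy (f1 f2 : ℕ → ℕ → ℝ) (V : Finset (ℤ × ℤ))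
    (η : ℤ × ℤ → ℕ) : ℝ :=
  ∑ x ∈ V.filter (fun x => x + e1 ∈ V), f1 (η x) (η (x + e1)) +
  ∑ x ∈ V.filter (fun x => x + e2 ∈ V), f2 (η x) (η (x + e2))

/-- Genericity condition: the `2(N+1)²` real numbers `f₁(a,b), f₂(a,b)` for
`(a,b) ∈ {0,…,N}²` are linearly independent over `ℚ`. -/
def Generic (N : ℕ) (f1 f2 : ℕ → ℕ → ℝ) : Prop :=
  LinearIndependent ℚ (fun p : Fin 2 × Fin (N + 1) × Fin (N + 1) =>
    if p.1 = 0 then f1 p.2.1 p.2.2 else f2 p.2.1 p.2.2)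

/-- A single nearest-neighbour particle hop: one particle moves between two sites
of `V` at `ℓ¹`-distance `1`, the source carrying at least one particle and the
target fewer than `N` particles; all other sites are unchanged. -/
def Hop (N : ℕ) (V : Finset (ℤ × ℤ)) (η η' : ℤ × ℤ → ℕ) : Prop :=
  ∃ u v : ℤ × ℤ, u ∈ V ∧ v ∈ V ∧ dist1 u v = 1 ∧
    1 ≤ η v ∧ η u < N ∧
    η' u = η u + 1 ∧ η' v = η v - 1 ∧ ∀ z, z ≠ u → z ≠ v → η' z = η z

/-- A resonant hop: a nearest-neighbour hop preserving the interaction energy. -/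
def ResonantHop (N : ℕ) (f1 f2 : ℕ → ℕ → ℝ) (V : Finset (ℤ × ℤ))
    (η η' : ℤ × ℤ → ℕ) : Prop :=
  Hop N V η η' ∧ interactionEnergy f1 f2 V η' = interactionEnergy f1 f2 V η

lemma generic_swap {N : ℕ} {f1 f2 : ℕ → ℕ → ℝ} (h : Generic N f1 f2) :
    Generic N f2 f1 := by
  have h2 := h.comp (Equiv.prodCongr (Equiv.swap (0 : Fin 2) 1)
    (Equiv.refl (Fin (N+1) × Fin (N+1)))) (Equiv.injective _)
  have he : (fun p : Fin 2 × Fin (N + 1) × Fin (N + 1) =>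
      if p.1 = 0 then f2 p.2.1 p.2.2 else f1 p.2.1 p.2.2) =
      (fun p : Fin 2 × Fin (N + 1) × Fin (N + 1) =>
      if p.1 = 0 then f1 p.2.1 p.2.2 else f2 p.2.1 p.2.2) ∘
      (Equiv.prodCongr (Equiv.swap (0 : Fin 2) 1) (Equiv.refl (Fin (N+1) × Fin (N+1)))) := by
    funext q
    obtain ⟨i, x⟩ := q
    fin_cases i <;>
      simp [Equiv.swap_apply_left, Equiv.swap_apply_right]
  rw [Generic, he]
  exact h2
lemma key (N : ℕ) (f1 f2 : ℕ → ℕ → ℝ) (hgen : Generic N f1 f2)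
    (a b c d L R A1 B1 A2 B2 : ℕ)
    (ha : a ≤ N) (hb : b ≤ N) (hc : c ≤ N) (hd : d ≤ N) (hL : L ≤ N) (hR : R ≤ N)
    (hA1 : A1 ≤ N) (hB1 : B1 ≤ N) (hA2 : A2 ≤ N) (hB2 : B2 ≤ N)
    (horient : (c = a + 1 ∧ b = d + 1) ∨ (a = c + 1 ∧ d = b + 1))
    (heq : f1 L c + f1 c d + f1 d R + f2 B1 c + f2 c A1 + f2 B2 d + f2 d A2
        = f1 L a + f1 a b + f1 b R + f2 B1 a + f2 a A1 + f2 B2 b + f2 b A2) :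
    ((a:ℤ) - b).natAbs = 1 ∧ ((L:ℤ) - a).natAbs ≤ 1 ∧ ((R:ℤ) - b).natAbs ≤ 1 := by
  set B : Fin 2 × Fin (N + 1) × Fin (N + 1) → ℝ := fun p =>
    if p.1 = 0 then f1 p.2.1 p.2.2 else f2 p.2.1 p.2.2 with hB
  set m : ℕ → Fin (N + 1) := fun n => ⟨min n N, by omega⟩ with hm
  set χ : (Fin 2 × Fin (N + 1) × Fin (N + 1)) → (Fin 2 × Fin (N + 1) × Fin (N + 1)) → ℚ :=
    fun t i => if t = i then 1 else 0 with hχ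
  set g : (Fin 2 × Fin (N + 1) × Fin (N + 1)) → ℚ := fun t =>
    χ t (0, m L, m c) + χ t (0, m c, m d) + χ t (0, m d, m R)
    + χ t (1, m B1, m c) + χ t (1, m c, m A1) + χ t (1, m B2, m d) + χ t (1, m d, m A2)
    - χ t (0, m L, m a) - χ t (0, m a, m b) - χ t (0, m b, m R)
    - χ t (1, m B1, m a) - χ t (1, m a, m A1) - χ t (1, m B2, m b) - χ t (1, m b, m A2) with hg
  have h0 : ∀ t, g t = 0 := by
    rw [Generic, Fintype.linearIndependent_iff] at hgen
    apply hgen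
    show ∑ i, g i • B i = 0
    have hsum : ∀ i : Fin 2 × Fin (N + 1) × Fin (N + 1),
        ∑ t, χ t i • B t = B i := by
      intro i
      simp [hχ, ite_smul]
    simp only [hg, add_smul, sub_smul, Finset.sum_add_distrib, Finset.sum_sub_distrib, hsum]
    simp only [hB, hm]
    norm_num [Nat.min_eq_left ha, Nat.min_eq_left hb, Nat.min_eq_left hc, Nat.min_eq_left hd,
      Nat.min_eq_left hL, Nat.min_eq_left hR, Nat.min_eq_left hA1, Nat.min_eq_left hB1,
      Nat.min_eq_left hA2, Nat.min_eq_left hB2]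
    linarith [heq]
  have h1 := h0 (0, m c, m d)
  have h2 := h0 (0, m L, m a)
  have h3 := h0 (0, m b, m R)
  simp [hg, hχ, hm, Prod.mk.injEq, Fin.mk.injEq, Nat.min_eq_left ha, Nat.min_eq_left hb,
    Nat.min_eq_left hc, Nat.min_eq_left hd, Nat.min_eq_left hL, Nat.min_eq_left hR,
    Nat.min_eq_left hA1, Nat.min_eq_left hB1, Nat.min_eq_left hA2, Nat.min_eq_left hB2] at h1 h2 h3
  have F1 : (c = L ∧ d = a) ∨ (c = a ∧ d = b) ∨ (c = b ∧ d = R) := by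
    by_contra hcc
    rw [not_or, not_or] at hcc
    obtain ⟨n1, n2, n3⟩ := hcc
    simp only [if_neg n1, if_neg n2, if_neg n3] at h1
    split_ifs at h1 <;> norm_num at h1
  have F2 : (a = c) ∨ (L = c ∧ a = d) ∨ (L = d ∧ a = R) := by
    by_contra hcc
    rw [not_or, not_or] at hcc
    obtain ⟨n1, n2, n3⟩ := hcc
    simp only [if_neg n1, if_neg n2, if_neg n3] at h2
    split_ifs at h2 <;> norm_num at h2
  have F3 : (b = L ∧ R = c) ∨ (b = c ∧ R = d) ∨ (b = d) := by
    by_contra hcc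
    rw [not_or, not_or] at hcc
    obtain ⟨n1, n2, n3⟩ := hcc
    simp only [if_neg n1, if_neg n2, if_neg n3] at h3
    split_ifs at h3 <;> norm_num at h3
  rcases horient with ⟨o1, o2⟩ | ⟨o1, o2⟩ <;>
    rcases F1 with ⟨e1, e2⟩ | ⟨e1, e2⟩ | ⟨e1, e2⟩ <;>
    rcases F2 with e3 | ⟨e3, e4⟩ | ⟨e3, e4⟩ <;>
    rcases F3 with ⟨e5, e6⟩ | ⟨e5, e6⟩ | e5 <;>
    omega
lemma energy_diff_horiz (f1 f2 : ℕ → ℕ → ℝ) (V : Finset (ℤ × ℤ)) (η η' : ℤ × ℤ → ℕ)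
    (x : ℤ × ℤ)
    (hmem : ∀ w, dist1 w x ≤ 2 → dist1 w (x + e1) ≤ 2 → w ∈ V)
    (hsame : ∀ z, z ≠ x → z ≠ x + e1 → η' z = η z) :
    interactionEnergy f1 f2 V η' - interactionEnergy f1 f2 V η =
      (f1 (η (x - e1)) (η' x) + f1 (η' x) (η' (x + e1)) + f1 (η' (x + e1)) (η (x + e1 + e1))
        + f2 (η (x - e2)) (η' x) + f2 (η' x) (η (x + e2))
        + f2 (η (x + e1 - e2)) (η' (x + e1)) + f2 (η' (x + e1)) (η (x + e1 + e2)))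
      - (f1 (η (x - e1)) (η x) + f1 (η x) (η (x + e1)) + f1 (η (x + e1)) (η (x + e1 + e1))
        + f2 (η (x - e2)) (η x) + f2 (η x) (η (x + e2))
        + f2 (η (x + e1 - e2)) (η (x + e1)) + f2 (η (x + e1)) (η (x + e1 + e2))) := by
  classical
  have hVmem : ∀ w : ℤ × ℤ, dist1 w x ≤ 2 → dist1 w (x + e1) ≤ 2 → w ∈ V := hmem
  -- memberships
  have hm1 : x - e1 ∈ V := by
    apply hmem <;> simp [dist1, e1, Prod.fst_add, Prod.snd_add, Prod.fst_sub, Prod.snd_sub] <;> omega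
  have hm2 : x ∈ V := by
    apply hmem <;> simp [dist1, e1, Prod.fst_add, Prod.snd_add] <;> omega
  have hm3 : x + e1 ∈ V := by
    apply hmem <;> simp [dist1, e1, Prod.fst_add, Prod.snd_add] <;> omega
  have hm4 : x + e1 + e1 ∈ V := by
    apply hmem <;> simp [dist1, e1, Prod.fst_add, Prod.snd_add] <;> omega
  have hm5 : x - e2 ∈ V := by
    apply hmem <;> simp [dist1, e1, e2, Prod.fst_add, Prod.snd_add, Prod.fst_sub, Prod.snd_sub] <;> omega
  have hm6 : x + e2 ∈ V := by
    apply hmem <;> simp [dist1, e1, e2, Prod.fst_add, Prod.snd_add] <;> omega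
  have hm7 : x + e1 - e2 ∈ V := by
    apply hmem <;> simp [dist1, e1, e2, Prod.fst_add, Prod.snd_add, Prod.fst_sub, Prod.snd_sub] <;> omega
  have hm8 : x + e1 + e2 ∈ V := by
    apply hmem <;> simp [dist1, e1, e2, Prod.fst_add, Prod.snd_add] <;> omega
  -- point (dis)equalities
  have q1 : x - e1 + e1 = x := by ext <;> simp [e1]
  have q2 : x - e2 + e2 = x := by ext <;> simp [e2]
  have q3 : x + e1 - e2 + e2 = x + e1 := by ext <;> simp [e1, e2]
  have ne1 : x - e1 ≠ x := by simp [Prod.ext_iff, e1]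
  have ne2 : x - e1 ≠ x + e1 := by simp [Prod.ext_iff, e1]; omega
  have ne3 : x ≠ x + e1 := by simp [Prod.ext_iff, e1]
  have ne4 : x + e1 + e1 ≠ x := by simp [Prod.ext_iff, e1]; omega
  have ne5 : x + e1 + e1 ≠ x + e1 := by simp [Prod.ext_iff, e1]
  have ne6 : x - e2 ≠ x := by simp [Prod.ext_iff, e2]
  have ne7 : x - e2 ≠ x + e1 := by simp [Prod.ext_iff, e1, e2]
  have ne8 : x + e2 ≠ x := by simp [Prod.ext_iff, e2]
  have ne9 : x + e2 ≠ x + e1 := by simp [Prod.ext_iff, e1, e2]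
  have ne10 : x + e1 - e2 ≠ x := by simp [Prod.ext_iff, e1, e2]
  have ne11 : x + e1 - e2 ≠ x + e1 := by simp [Prod.ext_iff, e1, e2]
  have ne12 : x + e1 + e2 ≠ x := by simp [Prod.ext_iff, e1, e2]
  have ne13 : x + e1 + e2 ≠ x + e1 := by simp [Prod.ext_iff, e1, e2]
  have ne14 : x + e1 - e2 ≠ x - e2 := by simp [Prod.ext_iff, e1, e2]
  set δ1 : ℤ × ℤ → ℝ := fun z => f1 (η' z) (η' (z + e1)) - f1 (η z) (η (z + e1)) with hδ1
  set δ2 : ℤ × ℤ → ℝ := fun z => f2 (η' z) (η' (z + e2)) - f2 (η z) (η (z + e2)) with hδ2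
  have key1 : ∑ z ∈ V.filter (fun z => z + e1 ∈ V), δ1 z
      = ∑ z ∈ ({x - e1, x, x + e1} : Finset (ℤ × ℤ)), δ1 z := by
    rw [eq_comm]
    apply Finset.sum_subset
    · intro z hz
      simp only [Finset.mem_insert, Finset.mem_singleton] at hz
      rcases hz with rfl | rfl | rfl <;> rw [Finset.mem_filter] <;>
        refine ⟨by assumption, ?_⟩
      · rwa [q1]
      · exact hm3
      · exact hm4
    · intro z _ hz
      simp only [Finset.mem_insert, Finset.mem_singleton] at hz
      push_neg at hz
      obtain ⟨hz1, hz2, hz3⟩ := hz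
      have e1' : η' z = η z := hsame z hz2 hz3
      have e2' : η' (z + e1) = η (z + e1) := by
        apply hsame
        · intro h; apply hz1; rw [← h]; ext <;> simp [e1]
        · intro h; apply hz2; exact add_right_cancel h
      simp [hδ1, e1', e2']
  have key2 : ∑ z ∈ V.filter (fun z => z + e2 ∈ V), δ2 z
      = ∑ z ∈ ({x - e2, x, x + e1 - e2, x + e1} : Finset (ℤ × ℤ)), δ2 z := by
    rw [eq_comm]
    apply Finset.sum_subset
    · intro z hz
      simp only [Finset.mem_insert, Finset.mem_singleton] at hz
      rcases hz with rfl | rfl | rfl | rfl <;> rw [Finset.mem_filter] <;>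
        refine ⟨by assumption, ?_⟩
      · rwa [q2]
      · exact hm6
      · rwa [q3]
      · exact hm8
    · intro z _ hz
      simp only [Finset.mem_insert, Finset.mem_singleton] at hz
      push_neg at hz
      obtain ⟨hz1, hz2, hz3, hz4⟩ := hz
      have e1' : η' z = η z := hsame z hz2 hz4
      have e2' : η' (z + e2) = η (z + e2) := by
        apply hsame
        · intro h; apply hz1; rw [← h]; ext <;> simp [e2]
        · intro h; apply hz3; rw [← h]; ext <;> simp [e1, e2]
      simp [hδ2, e1', e2']
  have expand1 : ∑ z ∈ ({x - e1, x, x + e1} : Finset (ℤ × ℤ)), δ1 z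
      = δ1 (x - e1) + δ1 x + δ1 (x + e1) := by
    rw [Finset.sum_insert (by simp [ne1, ne2]), Finset.sum_insert (by simp [ne3]),
      Finset.sum_singleton, add_assoc]
  have expand2 : ∑ z ∈ ({x - e2, x, x + e1 - e2, x + e1} : Finset (ℤ × ℤ)), δ2 z
      = δ2 (x - e2) + δ2 x + δ2 (x + e1 - e2) + δ2 (x + e1) := by
    rw [Finset.sum_insert (by
        simp only [Finset.mem_insert, Finset.mem_singleton]
        push_neg
        exact ⟨ne6, ne14.symm, ne7⟩),
      Finset.sum_insert (by
        simp only [Finset.mem_insert, Finset.mem_singleton]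
        push_neg
        exact ⟨ne10.symm, ne3⟩),
      Finset.sum_insert (by simpa using ne11), Finset.sum_singleton]
    ring
  have hE : interactionEnergy f1 f2 V η' - interactionEnergy f1 f2 V η
      = ∑ z ∈ V.filter (fun z => z + e1 ∈ V), δ1 z + ∑ z ∈ V.filter (fun z => z + e2 ∈ V), δ2 z := by
    rw [interactionEnergy, interactionEnergy, hδ1, hδ2,
      Finset.sum_sub_distrib, Finset.sum_sub_distrib]
    ring
  rw [hE, key1, key2, expand1, expand2, hδ1, hδ2]
  simp only [q1, q2, q3]
  rw [hsame (x - e1) ne1 ne2, hsame (x + e1 + e1) ne4 ne5, hsame (x - e2) ne6 ne7,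
    hsame (x + e2) ne8 ne9, hsame (x + e1 - e2) ne10 ne11, hsame (x + e1 + e2) ne12 ne13]
  ring

lemma energy_diff_vert (f2 f1 : ℕ → ℕ → ℝ) (V : Finset (ℤ × ℤ)) (η η' : ℤ × ℤ → ℕ)
    (x : ℤ × ℤ)
    (hmem : ∀ w, dist1 w x ≤ 2 → dist1 w (x + e2) ≤ 2 → w ∈ V)
    (hsame : ∀ z, z ≠ x → z ≠ x + e2 → η' z = η z) :
    interactionEnergy f1 f2 V η' - interactionEnergy f1 f2 V η =
      (f2 (η (x - e2)) (η' x) + f2 (η' x) (η' (x + e2)) + f2 (η' (x + e2)) (η (x + e2 + e2))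
        + f1 (η (x - e1)) (η' x) + f1 (η' x) (η (x + e1))
        + f1 (η (x + e2 - e1)) (η' (x + e2)) + f1 (η' (x + e2)) (η (x + e2 + e1)))
      - (f2 (η (x - e2)) (η x) + f2 (η x) (η (x + e2)) + f2 (η (x + e2)) (η (x + e2 + e2))
        + f1 (η (x - e1)) (η x) + f1 (η x) (η (x + e1))
        + f1 (η (x + e2 - e1)) (η (x + e2)) + f1 (η (x + e2)) (η (x + e2 + e1))) := by
  classical
  have hVmem : ∀ w : ℤ × ℤ, dist1 w x ≤ 2 → dist1 w (x + e2) ≤ 2 → w ∈ V := hmem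
  -- memberships
  have hm1 : x - e2 ∈ V := by
    apply hmem <;> simp [dist1, e2, Prod.fst_add, Prod.snd_add, Prod.fst_sub, Prod.snd_sub] <;> omega
  have hm2 : x ∈ V := by
    apply hmem <;> simp [dist1, e2, Prod.fst_add, Prod.snd_add] <;> omega
  have hm3 : x + e2 ∈ V := by
    apply hmem <;> simp [dist1, e2, Prod.fst_add, Prod.snd_add] <;> omega
  have hm4 : x + e2 + e2 ∈ V := by
    apply hmem <;> simp [dist1, e2, Prod.fst_add, Prod.snd_add] <;> omega
  have hm5 : x - e1 ∈ V := by
    apply hmem <;> simp [dist1, e2, e1, Prod.fst_add, Prod.snd_add, Prod.fst_sub, Prod.snd_sub] <;> omega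
  have hm6 : x + e1 ∈ V := by
    apply hmem <;> simp [dist1, e2, e1, Prod.fst_add, Prod.snd_add] <;> omega
  have hm7 : x + e2 - e1 ∈ V := by
    apply hmem <;> simp [dist1, e2, e1, Prod.fst_add, Prod.snd_add, Prod.fst_sub, Prod.snd_sub] <;> omega
  have hm8 : x + e2 + e1 ∈ V := by
    apply hmem <;> simp [dist1, e2, e1, Prod.fst_add, Prod.snd_add] <;> omega
  -- point (dis)equalities
  have q1 : x - e2 + e2 = x := by ext <;> simp [e2]
  have q2 : x - e1 + e1 = x := by ext <;> simp [e1]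
  have q3 : x + e2 - e1 + e1 = x + e2 := by ext <;> simp [e2, e1]
  have ne2 : x - e2 ≠ x := by simp [Prod.ext_iff, e2]
  have ne1 : x - e2 ≠ x + e2 := by simp [Prod.ext_iff, e2]; omega
  have ne3 : x ≠ x + e2 := by simp [Prod.ext_iff, e2]
  have ne4 : x + e2 + e2 ≠ x := by simp [Prod.ext_iff, e2]; omega
  have ne5 : x + e2 + e2 ≠ x + e2 := by simp [Prod.ext_iff, e2]
  have ne6 : x - e1 ≠ x := by simp [Prod.ext_iff, e1]
  have ne7 : x - e1 ≠ x + e2 := by simp [Prod.ext_iff, e2, e1]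
  have ne8 : x + e1 ≠ x := by simp [Prod.ext_iff, e1]
  have ne9 : x + e1 ≠ x + e2 := by simp [Prod.ext_iff, e2, e1]
  have ne20 : x + e2 - e1 ≠ x := by simp [Prod.ext_iff, e2, e1]
  have ne21 : x + e2 - e1 ≠ x + e2 := by simp [Prod.ext_iff, e2, e1]
  have ne22 : x + e2 + e1 ≠ x := by simp [Prod.ext_iff, e2, e1]
  have ne23 : x + e2 + e1 ≠ x + e2 := by simp [Prod.ext_iff, e2, e1]
  have ne24 : x + e2 - e1 ≠ x - e1 := by simp [Prod.ext_iff, e2, e1]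
  set δ1 : ℤ × ℤ → ℝ := fun z => f2 (η' z) (η' (z + e2)) - f2 (η z) (η (z + e2)) with hδ1
  set δ2 : ℤ × ℤ → ℝ := fun z => f1 (η' z) (η' (z + e1)) - f1 (η z) (η (z + e1)) with hδ2
  have key1 : ∑ z ∈ V.filter (fun z => z + e2 ∈ V), δ1 z
      = ∑ z ∈ ({x - e2, x, x + e2} : Finset (ℤ × ℤ)), δ1 z := by
    rw [eq_comm]
    apply Finset.sum_subset
    · intro z hz
      simp only [Finset.mem_insert, Finset.mem_singleton] at hz
      rcases hz with rfl | rfl | rfl <;> rw [Finset.mem_filter] <;>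
        refine ⟨by assumption, ?_⟩
      · rwa [q1]
      · exact hm3
      · exact hm4
    · intro z _ hz
      simp only [Finset.mem_insert, Finset.mem_singleton] at hz
      push_neg at hz
      obtain ⟨hz1, hz2, hz3⟩ := hz
      have e2' : η' z = η z := hsame z hz2 hz3
      have e1' : η' (z + e2) = η (z + e2) := by
        apply hsame
        · intro h; apply hz1; rw [← h]; ext <;> simp [e2]
        · intro h; apply hz2; exact add_right_cancel h
      simp [hδ1, e2', e1']
  have key2 : ∑ z ∈ V.filter (fun z => z + e1 ∈ V), δ2 z
      = ∑ z ∈ ({x - e1, x, x + e2 - e1, x + e2} : Finset (ℤ × ℤ)), δ2 z := by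
    rw [eq_comm]
    apply Finset.sum_subset
    · intro z hz
      simp only [Finset.mem_insert, Finset.mem_singleton] at hz
      rcases hz with rfl | rfl | rfl | rfl <;> rw [Finset.mem_filter] <;>
        refine ⟨by assumption, ?_⟩
      · rwa [q2]
      · exact hm6
      · rwa [q3]
      · exact hm8
    · intro z _ hz
      simp only [Finset.mem_insert, Finset.mem_singleton] at hz
      push_neg at hz
      obtain ⟨hz1, hz2, hz3, hz4⟩ := hz
      have e2' : η' z = η z := hsame z hz2 hz4
      have e1' : η' (z + e1) = η (z + e1) := by
        apply hsame
        · intro h; apply hz1; rw [← h]; ext <;> simp [e1]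
        · intro h; apply hz3; rw [← h]; ext <;> simp [e2, e1]
      simp [hδ2, e2', e1']
  have expand1 : ∑ z ∈ ({x - e2, x, x + e2} : Finset (ℤ × ℤ)), δ1 z
      = δ1 (x - e2) + δ1 x + δ1 (x + e2) := by
    rw [Finset.sum_insert (by simp [ne2, ne1]), Finset.sum_insert (by simp [ne3]),
      Finset.sum_singleton, add_assoc]
  have expand2 : ∑ z ∈ ({x - e1, x, x + e2 - e1, x + e2} : Finset (ℤ × ℤ)), δ2 z
      = δ2 (x - e1) + δ2 x + δ2 (x + e2 - e1) + δ2 (x + e2) := by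
    rw [Finset.sum_insert (by
        simp only [Finset.mem_insert, Finset.mem_singleton]
        push_neg
        exact ⟨ne6, ne24.symm, ne7⟩),
      Finset.sum_insert (by
        simp only [Finset.mem_insert, Finset.mem_singleton]
        push_neg
        exact ⟨ne20.symm, ne3⟩),
      Finset.sum_insert (by simpa using ne21), Finset.sum_singleton]
    ring
  have hE : interactionEnergy f1 f2 V η' - interactionEnergy f1 f2 V η
      = ∑ z ∈ V.filter (fun z => z + e2 ∈ V), δ1 z + ∑ z ∈ V.filter (fun z => z + e1 ∈ V), δ2 z := by
    rw [interactionEnergy, interactionEnergy, hδ1, hδ2,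
      Finset.sum_sub_distrib, Finset.sum_sub_distrib]
    ring
  rw [hE, key1, key2, expand1, expand2, hδ1, hδ2]
  simp only [q1, q2, q3]
  rw [hsame (x - e2) ne2 ne1, hsame (x + e2 + e2) ne4 ne5, hsame (x - e1) ne6 ne7,
    hsame (x + e1) ne8 ne9, hsame (x + e2 - e1) ne20 ne21, hsame (x + e2 + e1) ne22 ne23]
  ring

lemma horiz_core (N : ℕ) (f1 f2 : ℕ → ℕ → ℝ) (hgen : Generic N f1 f2)
    (V : Finset (ℤ × ℤ)) (η η' : ℤ × ℤ → ℕ) (hη : ∀ z, η z ≤ N) (x : ℤ × ℤ)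
    (hmem : ∀ w, dist1 w x ≤ 2 → dist1 w (x + e1) ≤ 2 → w ∈ V)
    (hsame : ∀ z, z ≠ x → z ≠ x + e1 → η' z = η z)
    (hc : η' x ≤ N) (hd : η' (x + e1) ≤ N)
    (horient : (η' x = η x + 1 ∧ η (x + e1) = η' (x + e1) + 1) ∨
      (η x = η' x + 1 ∧ η' (x + e1) = η (x + e1) + 1))
    (hE : interactionEnergy f1 f2 V η' = interactionEnergy f1 f2 V η) :
    ((η x : ℤ) - η (x + e1)).natAbs = 1 ∧
      ((η (x - e1) : ℤ) - η x).natAbs ≤ 1 ∧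
      ((η (x + e1 + e1) : ℤ) - η (x + e1)).natAbs ≤ 1 := by
  have hdiff := energy_diff_horiz f1 f2 V η η' x hmem hsame
  rw [hE, sub_self] at hdiff
  exact key N f1 f2 hgen (η x) (η (x + e1)) (η' x) (η' (x + e1)) (η (x - e1))
    (η (x + e1 + e1)) (η (x + e2)) (η (x - e2)) (η (x + e1 + e2)) (η (x + e1 - e2))
    (hη _) (hη _) hc hd (hη _) (hη _) (hη _) (hη _) (hη _) (hη _) horient
    (by linarith)

lemma vert_core (N : ℕ) (f1 f2 : ℕ → ℕ → ℝ) (hgen : Generic N f1 f2)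
    (V : Finset (ℤ × ℤ)) (η η' : ℤ × ℤ → ℕ) (hη : ∀ z, η z ≤ N) (x : ℤ × ℤ)
    (hmem : ∀ w, dist1 w x ≤ 2 → dist1 w (x + e2) ≤ 2 → w ∈ V)
    (hsame : ∀ z, z ≠ x → z ≠ x + e2 → η' z = η z)
    (hc : η' x ≤ N) (hd : η' (x + e2) ≤ N)
    (horient : (η' x = η x + 1 ∧ η (x + e2) = η' (x + e2) + 1) ∨
      (η x = η' x + 1 ∧ η' (x + e2) = η (x + e2) + 1))
    (hE : interactionEnergy f1 f2 V η' = interactionEnergy f1 f2 V η) :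
    ((η x : ℤ) - η (x + e2)).natAbs = 1 ∧
      ((η (x - e2) : ℤ) - η x).natAbs ≤ 1 ∧
      ((η (x + e2 + e2) : ℤ) - η (x + e2)).natAbs ≤ 1 := by
  have hdiff := energy_diff_vert f2 f1 V η η' x hmem hsame
  rw [hE, sub_self] at hdiff
  exact key N f2 f1 (generic_swap hgen) (η x) (η (x + e2)) (η' x) (η' (x + e2)) (η (x - e2))
    (η (x + e2 + e2)) (η (x + e1)) (η (x - e1)) (η (x + e2 + e1)) (η (x + e2 - e1))
    (hη _) (hη _) hc hd (hη _) (hη _) (hη _) (hη _) (hη _) (hη _) horient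
    (by linarith)

lemma side_contra (η : ℤ × ℤ → ℕ) (x σ w : ℤ × ℤ)
    (K1 : ((η x : ℤ) - η (x + w)).natAbs = 1)
    (K2 : ((η (x - w) : ℤ) - η x).natAbs ≤ 1)
    (K3 : ((η (x + w + w) : ℤ) - η (x + w)).natAbs ≤ 1)
    (hside : 2 ≤ ((η σ : ℤ) - η (σ + w)).natAbs)
    (hpos : σ = x - w ∨ σ = x ∨ σ = x + w) : False := by
  rcases hpos with rfl | rfl | rfl
  · rw [sub_add_cancel] at hside; omega
  · omega
  · omega

lemma step (N : ℕ) (f1 f2 : ℕ → ℕ → ℝ) (hgen : Generic N f1 f2)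
    (V : Finset (ℤ × ℤ)) (p : ℤ × ℤ)
    (hV : ∀ w : ℤ × ℤ,
      (dist1 w p ≤ 2 ∨ dist1 w (p + e1) ≤ 2 ∨ dist1 w (p + e1 + e2) ≤ 2 ∨
        dist1 w (p + e2) ≤ 2) → w ∈ V)
    (η η' : ℤ × ℤ → ℕ) (hη : ∀ z, η z ≤ N)
    (h12 : 2 ≤ ((η p : ℤ) - (η (p + e1) : ℤ)).natAbs)
    (h23 : 2 ≤ ((η (p + e1) : ℤ) - (η (p + e1 + e2) : ℤ)).natAbs)
    (h34 : 2 ≤ ((η (p + e1 + e2) : ℤ) - (η (p + e2) : ℤ)).natAbs)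
    (h41 : 2 ≤ ((η (p + e2) : ℤ) - (η p : ℤ)).natAbs)
    (h : ResonantHop N f1 f2 V η η') :
    (η' p = η p ∧ η' (p + e1) = η (p + e1) ∧ η' (p + e1 + e2) = η (p + e1 + e2) ∧
      η' (p + e2) = η (p + e2)) ∧ ∀ z, η' z ≤ N := by
  obtain ⟨⟨u, v, huV, hvV, hduv, hv1, huN, hu', hv', hoth⟩, hE⟩ := h
  have hbound : ∀ z, η' z ≤ N := by
    intro z
    by_cases h1 : z = u
    · subst h1; rw [hu']; omega
    · by_cases h2 : z = v
      · subst h2; rw [hv']; have := hη z; omega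
      · rw [hoth z h1 h2]; exact hη z
  refine ⟨?_, hbound⟩
  by_cases hcor : (u = p ∨ u = p + e1 ∨ u = p + e1 + e2 ∨ u = p + e2) ∨
      (v = p ∨ v = p + e1 ∨ v = p + e1 + e2 ∨ v = p + e2)
  · exfalso
    have hs34 : 2 ≤ ((η (p + e2) : ℤ) - η (p + e2 + e1)).natAbs := by
      rw [show p + e2 + e1 = p + e1 + e2 from by ring]; omega
    have hs41 : 2 ≤ ((η p : ℤ) - η (p + e2)).natAbs := by omega
    have hs23 : 2 ≤ ((η (p + e1) : ℤ) - η (p + e1 + e2)).natAbs := h23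
    have hdir : v = u + e1 ∨ u = v + e1 ∨ v = u + e2 ∨ u = v + e2 := by
      have h1 := hduv
      unfold dist1 at h1
      simp only [e1, e2, Prod.ext_iff, Prod.fst_add, Prod.snd_add]
      omega
    rcases hdir with hd1 | hd1 | hd1 | hd1
    · subst hd1
      have hmemx : ∀ w, dist1 w u ≤ 2 → dist1 w (u + e1) ≤ 2 → w ∈ V := by
        intro w hw1 hw2
        apply hV
        rcases hcor with (h' | h' | h' | h') | (h' | h' | h' | h')
        · exact Or.inl (h' ▸ hw1)
        · exact Or.inr (Or.inl (h' ▸ hw1))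
        · exact Or.inr (Or.inr (Or.inl (h' ▸ hw1)))
        · exact Or.inr (Or.inr (Or.inr (h' ▸ hw1)))
        · exact Or.inl (h' ▸ hw2)
        · exact Or.inr (Or.inl (h' ▸ hw2))
        · exact Or.inr (Or.inr (Or.inl (h' ▸ hw2)))
        · exact Or.inr (Or.inr (Or.inr (h' ▸ hw2)))
      obtain ⟨K1, K2, K3⟩ := horiz_core N f1 f2 hgen V η η' hη u hmemx (fun z hz1 hz2 => hoth z hz1 hz2)
        (by rw [hu']; omega) (by rw [hv']; have := hη (u + e1); omega) (Or.inl ⟨hu', by rw [hv']; omega⟩) hE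
      rcases hcor with (h' | h' | h' | h') | (h' | h' | h' | h')
      · exact side_contra η u (p) e1 K1 K2 K3 h12 (Or.inr (Or.inl h'.symm))
      · exact side_contra η u (p) e1 K1 K2 K3 h12 (Or.inl (by first | (rw [h']; ring) | rw [h']))
      · exact side_contra η u (p + e2) e1 K1 K2 K3 hs34 (Or.inl (by first | (rw [h']; ring) | rw [h']))
      · exact side_contra η u (p + e2) e1 K1 K2 K3 hs34 (Or.inr (Or.inl h'.symm))
      · exact side_contra η u (p) e1 K1 K2 K3 h12 (Or.inr (Or.inr h'.symm))
      · exact side_contra η u (p) e1 K1 K2 K3 h12 (Or.inr (Or.inl (by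
            have h2 : u + e1 = p + e1 := by first | (rw [h']; ring) | rw [h']
            exact (add_right_cancel h2).symm)))
      · exact side_contra η u (p + e2) e1 K1 K2 K3 hs34 (Or.inr (Or.inl (by
            have h2 : u + e1 = p + e2 + e1 := by first | (rw [h']; ring) | rw [h']
            exact (add_right_cancel h2).symm)))
      · exact side_contra η u (p + e2) e1 K1 K2 K3 hs34 (Or.inr (Or.inr h'.symm))

    · subst hd1
      have hmemx : ∀ w, dist1 w v ≤ 2 → dist1 w (v + e1) ≤ 2 → w ∈ V := by
        intro w hw1 hw2
        apply hV
        rcases hcor with (h' | h' | h' | h') | (h' | h' | h' | h')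
        · exact Or.inl (h' ▸ hw2)
        · exact Or.inr (Or.inl (h' ▸ hw2))
        · exact Or.inr (Or.inr (Or.inl (h' ▸ hw2)))
        · exact Or.inr (Or.inr (Or.inr (h' ▸ hw2)))
        · exact Or.inl (h' ▸ hw1)
        · exact Or.inr (Or.inl (h' ▸ hw1))
        · exact Or.inr (Or.inr (Or.inl (h' ▸ hw1)))
        · exact Or.inr (Or.inr (Or.inr (h' ▸ hw1)))
      obtain ⟨K1, K2, K3⟩ := horiz_core N f1 f2 hgen V η η' hη v hmemx (fun z hz1 hz2 => hoth z hz2 hz1)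
        (by rw [hv']; have := hη v; omega) (by rw [hu']; omega) (Or.inr ⟨by rw [hv']; omega, hu'⟩) hE
      rcases hcor with (h' | h' | h' | h') | (h' | h' | h' | h')
      · exact side_contra η v (p) e1 K1 K2 K3 h12 (Or.inr (Or.inr h'.symm))
      · exact side_contra η v (p) e1 K1 K2 K3 h12 (Or.inr (Or.inl (by
            have h2 : v + e1 = p + e1 := by first | (rw [h']; ring) | rw [h']
            exact (add_right_cancel h2).symm)))
      · exact side_contra η v (p + e2) e1 K1 K2 K3 hs34 (Or.inr (Or.inl (by
            have h2 : v + e1 = p + e2 + e1 := by first | (rw [h']; ring) | rw [h']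
            exact (add_right_cancel h2).symm)))
      · exact side_contra η v (p + e2) e1 K1 K2 K3 hs34 (Or.inr (Or.inr h'.symm))
      · exact side_contra η v (p) e1 K1 K2 K3 h12 (Or.inr (Or.inl h'.symm))
      · exact side_contra η v (p) e1 K1 K2 K3 h12 (Or.inl (by first | (rw [h']; ring) | rw [h']))
      · exact side_contra η v (p + e2) e1 K1 K2 K3 hs34 (Or.inl (by first | (rw [h']; ring) | rw [h']))
      · exact side_contra η v (p + e2) e1 K1 K2 K3 hs34 (Or.inr (Or.inl h'.symm))

    · subst hd1
      have hmemx : ∀ w, dist1 w u ≤ 2 → dist1 w (u + e2) ≤ 2 → w ∈ V := by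
        intro w hw1 hw2
        apply hV
        rcases hcor with (h' | h' | h' | h') | (h' | h' | h' | h')
        · exact Or.inl (h' ▸ hw1)
        · exact Or.inr (Or.inl (h' ▸ hw1))
        · exact Or.inr (Or.inr (Or.inl (h' ▸ hw1)))
        · exact Or.inr (Or.inr (Or.inr (h' ▸ hw1)))
        · exact Or.inl (h' ▸ hw2)
        · exact Or.inr (Or.inl (h' ▸ hw2))
        · exact Or.inr (Or.inr (Or.inl (h' ▸ hw2)))
        · exact Or.inr (Or.inr (Or.inr (h' ▸ hw2)))
      obtain ⟨K1, K2, K3⟩ := vert_core N f1 f2 hgen V η η' hη u hmemx (fun z hz1 hz2 => hoth z hz1 hz2)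
        (by rw [hu']; omega) (by rw [hv']; have := hη (u + e2); omega) (Or.inl ⟨hu', by rw [hv']; omega⟩) hE
      rcases hcor with (h' | h' | h' | h') | (h' | h' | h' | h')
      · exact side_contra η u (p) e2 K1 K2 K3 hs41 (Or.inr (Or.inl h'.symm))
      · exact side_contra η u (p + e1) e2 K1 K2 K3 hs23 (Or.inr (Or.inl h'.symm))
      · exact side_contra η u (p + e1) e2 K1 K2 K3 hs23 (Or.inl (by first | (rw [h']; ring) | rw [h']))
      · exact side_contra η u (p) e2 K1 K2 K3 hs41 (Or.inl (by first | (rw [h']; ring) | rw [h']))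
      · exact side_contra η u (p) e2 K1 K2 K3 hs41 (Or.inr (Or.inr h'.symm))
      · exact side_contra η u (p + e1) e2 K1 K2 K3 hs23 (Or.inr (Or.inr h'.symm))
      · exact side_contra η u (p + e1) e2 K1 K2 K3 hs23 (Or.inr (Or.inl (by
            have h2 : u + e2 = p + e1 + e2 := by first | (rw [h']; ring) | rw [h']
            exact (add_right_cancel h2).symm)))
      · exact side_contra η u (p) e2 K1 K2 K3 hs41 (Or.inr (Or.inl (by
            have h2 : u + e2 = p + e2 := by first | (rw [h']; ring) | rw [h']
            exact (add_right_cancel h2).symm)))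

    · subst hd1
      have hmemx : ∀ w, dist1 w v ≤ 2 → dist1 w (v + e2) ≤ 2 → w ∈ V := by
        intro w hw1 hw2
        apply hV
        rcases hcor with (h' | h' | h' | h') | (h' | h' | h' | h')
        · exact Or.inl (h' ▸ hw2)
        · exact Or.inr (Or.inl (h' ▸ hw2))
        · exact Or.inr (Or.inr (Or.inl (h' ▸ hw2)))
        · exact Or.inr (Or.inr (Or.inr (h' ▸ hw2)))
        · exact Or.inl (h' ▸ hw1)
        · exact Or.inr (Or.inl (h' ▸ hw1))
        · exact Or.inr (Or.inr (Or.inl (h' ▸ hw1)))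
        · exact Or.inr (Or.inr (Or.inr (h' ▸ hw1)))
      obtain ⟨K1, K2, K3⟩ := vert_core N f1 f2 hgen V η η' hη v hmemx (fun z hz1 hz2 => hoth z hz2 hz1)
        (by rw [hv']; have := hη v; omega) (by rw [hu']; omega) (Or.inr ⟨by rw [hv']; omega, hu'⟩) hE
      rcases hcor with (h' | h' | h' | h') | (h' | h' | h' | h')
      · exact side_contra η v (p) e2 K1 K2 K3 hs41 (Or.inr (Or.inr h'.symm))
      · exact side_contra η v (p + e1) e2 K1 K2 K3 hs23 (Or.inr (Or.inr h'.symm))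
      · exact side_contra η v (p + e1) e2 K1 K2 K3 hs23 (Or.inr (Or.inl (by
            have h2 : v + e2 = p + e1 + e2 := by first | (rw [h']; ring) | rw [h']
            exact (add_right_cancel h2).symm)))
      · exact side_contra η v (p) e2 K1 K2 K3 hs41 (Or.inr (Or.inl (by
            have h2 : v + e2 = p + e2 := by first | (rw [h']; ring) | rw [h']
            exact (add_right_cancel h2).symm)))
      · exact side_contra η v (p) e2 K1 K2 K3 hs41 (Or.inr (Or.inl h'.symm))
      · exact side_contra η v (p + e1) e2 K1 K2 K3 hs23 (Or.inr (Or.inl h'.symm))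
      · exact side_contra η v (p + e1) e2 K1 K2 K3 hs23 (Or.inl (by first | (rw [h']; ring) | rw [h']))
      · exact side_contra η v (p) e2 K1 K2 K3 hs41 (Or.inl (by first | (rw [h']; ring) | rw [h']))

  · push_neg at hcor
    obtain ⟨⟨u1, u2, u3, u4⟩, v1, v2, v3, v4⟩ := hcor
    exact ⟨hoth p (Ne.symm u1) (Ne.symm v1), hoth (p + e1) (Ne.symm u2) (Ne.symm v2),
      hoth (p + e1 + e2) (Ne.symm u3) (Ne.symm v3), hoth (p + e2) (Ne.symm u4) (Ne.symm v4)⟩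

/-- **A strongly inhomogeneous square is frozen under the resonant dynamics
(Appendix 2, equations (20)–(21)).** Under the genericity condition, consider the
unit square with corners `s₁ = p`, `s₂ = p + e₁`, `s₃ = p + e₁ + e₂`,
`s₄ = p + e₂`, all of whose `ℓ¹`-`2`-neighbourhoods lie in `V`, and a
configuration `η` whose occupation numbers differ by at least `2` along each side
of the square. Then any configuration `η'` obtained from `η` by a finite sequence
of nearest-neighbour hops, each preserving the interaction energy, agrees with
`η` on the four corners. -/
theorem frozen_square_resonant_dynamics (N : ℕ) (hN : 1 ≤ N) (f1 f2 : ℕ → ℕ → ℝ)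
    (hgen : Generic N f1 f2) (V : Finset (ℤ × ℤ)) (p : ℤ × ℤ)
    (hV : ∀ w : ℤ × ℤ,
      (dist1 w p ≤ 2 ∨ dist1 w (p + e1) ≤ 2 ∨ dist1 w (p + e1 + e2) ≤ 2 ∨
        dist1 w (p + e2) ≤ 2) → w ∈ V)
    (η η' : ℤ × ℤ → ℕ) (hη : ∀ z, η z ≤ N)
    (h12 : 2 ≤ ((η p : ℤ) - (η (p + e1) : ℤ)).natAbs)
    (h23 : 2 ≤ ((η (p + e1) : ℤ) - (η (p + e1 + e2) : ℤ)).natAbs)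
    (h34 : 2 ≤ ((η (p + e1 + e2) : ℤ) - (η (p + e2) : ℤ)).natAbs)
    (h41 : 2 ≤ ((η (p + e2) : ℤ) - (η p : ℤ)).natAbs)
    (hchain : Relation.ReflTransGen (ResonantHop N f1 f2 V) η η') :
    η' p = η p ∧ η' (p + e1) = η (p + e1) ∧
      η' (p + e1 + e2) = η (p + e1 + e2) ∧ η' (p + e2) = η (p + e2) := by
  suffices hs : (η' p = η p ∧ η' (p + e1) = η (p + e1) ∧
      η' (p + e1 + e2) = η (p + e1 + e2) ∧ η' (p + e2) = η (p + e2)) ∧ ∀ z, η' z ≤ N from hs.1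
  induction hchain with
  | refl => exact ⟨⟨rfl, rfl, rfl, rfl⟩, hη⟩
  | tail hab hbc ih =>
    obtain ⟨⟨i1, i2, i3, i4⟩, ib⟩ := ih
    obtain ⟨⟨j1, j2, j3, j4⟩, jb⟩ := step N f1 f2 hgen V p hV _ _ ib
      (by rw [i1, i2]; exact h12) (by rw [i2, i3]; exact h23)
      (by rw [i3, i4]; exact h34) (by rw [i4, i1]; exact h41) hbc
    exact ⟨⟨j1.trans i1, j2.trans i2, j3.trans i3, j4.trans i4⟩, jb⟩
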